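/- Let circles of total area A be packed into N bins of size w × h, and suppose h/w ≥ 1/ε² for some 0 < ε < 1. Split each bin into ⌈h/(w/ε)⌉ horizontal sub-bins of size w × (w/ε) (truncating at the top). Then the total area of circles intersecting more than one sub-bin (i.e., crossing a horizontal cut line) is at most N·2w²·⌊hε/w⌋ ≤ 2ε·N·wh. -/

import Mathlib

open MeasureTheory Metric in
lemma pack_lemma {ι : Type*} (s : Finset ι) (x y r : ι → ℝ)
    (hr : ∀ i ∈ s, 0 < r i)
    (a₀ b₀ a₁ b₁ : ℝ) (hab0 : a₀ ≤ b₀) (hab1 : a₁ ≤ b₁)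
    (hsub : ∀ i ∈ s, a₀ ≤ x i - r i ∧ x i + r i ≤ b₀ ∧ a₁ ≤ y i - r i ∧ y i + r i ≤ b₁)
    (hd : ∀ i ∈ s, ∀ j ∈ s, i ≠ j → (r i + r j) ^ 2 ≤ (x i - x j) ^ 2 + (y i - y j) ^ 2) :
    ∑ i ∈ s, Real.pi * r i ^ 2 ≤ (b₀ - a₀) * (b₁ - a₁) := by
  classical
  set c : ι → ℂ := fun i => ⟨x i, y i⟩ with hc
  set B : ι → Set ℂ := fun i => ball (c i) (r i) with hB
  have hBsub : ∀ i ∈ s, B i ⊆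
      Complex.measurableEquivRealProd ⁻¹' (Set.Icc a₀ b₀ ×ˢ Set.Icc a₁ b₁) := by
    intro i hi z hz
    have hz' : dist z (c i) < r i := hz
    have hre : |z.re - x i| ≤ dist z (c i) := by
      rw [Complex.dist_eq_re_im]
      calc |z.re - x i| = Real.sqrt ((z.re - x i) ^ 2) := (Real.sqrt_sq_eq_abs _).symm
        _ ≤ _ := Real.sqrt_le_sqrt (by simp only [hc]; nlinarith [sq_nonneg (z.im - y i)])
    have him : |z.im - y i| ≤ dist z (c i) := by
      rw [Complex.dist_eq_re_im]
      calc |z.im - y i| = Real.sqrt ((z.im - y i) ^ 2) := (Real.sqrt_sq_eq_abs _).symm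
        _ ≤ _ := Real.sqrt_le_sqrt (by simp only [hc]; nlinarith [sq_nonneg (z.re - x i)])
    obtain ⟨h1, h2, h3, h4⟩ := hsub i hi
    rw [abs_le] at hre him
    have hzeq : Complex.measurableEquivRealProd z = (z.re, z.im) := rfl
    simp only [Set.mem_preimage, hzeq, Set.mem_prod, Set.mem_Icc]
    refine ⟨⟨?_, ?_⟩, ?_, ?_⟩ <;> linarith [hre.1, hre.2, him.1, him.2]
  have hdisjB : (s : Set ι).PairwiseDisjoint B := by
    intro i hi j hj hij
    apply ball_disjoint_ball
    have hsum := hd i hi j hj hij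
    have hdist : dist (c i) (c j) = Real.sqrt ((x i - x j) ^ 2 + (y i - y j) ^ 2) := by
      rw [Complex.dist_eq_re_im]
    have h0 : 0 ≤ r i + r j := by linarith [hr i hi, hr j hj]
    have hsq := Real.sq_sqrt (by positivity : (0:ℝ) ≤ (x i - x j) ^ 2 + (y i - y j) ^ 2)
    nlinarith [Real.sqrt_nonneg ((x i - x j) ^ 2 + (y i - y j) ^ 2)]
  have hvol : ∑ i ∈ s, volume (B i) = volume (⋃ i ∈ s, B i) :=
    (measure_biUnion_finset hdisjB (fun i _ => measurableSet_ball)).symm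
  have hboxvol : volume (Complex.measurableEquivRealProd ⁻¹'
      (Set.Icc a₀ b₀ ×ˢ Set.Icc a₁ b₁)) = ENNReal.ofReal ((b₀ - a₀) * (b₁ - a₁)) := by
    rw [Complex.volume_preserving_equiv_real_prod.measure_preimage
      ((measurableSet_Icc.prod measurableSet_Icc).nullMeasurableSet)]
    rw [Measure.volume_eq_prod, Measure.prod_prod, Real.volume_Icc, Real.volume_Icc,
      ENNReal.ofReal_mul (by linarith)]
  have key : ∑ i ∈ s, volume (B i) ≤ ENNReal.ofReal ((b₀ - a₀) * (b₁ - a₁)) := by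
    rw [hvol, ← hboxvol]
    exact measure_mono (Set.iUnion₂_subset hBsub)
  have hBvol : ∀ i ∈ s, volume (B i) = ENNReal.ofReal (Real.pi * r i ^ 2) := by
    intro i hi
    simp only [hB, Complex.volume_ball]
    have hpi : ((NNReal.pi : ENNReal)) = ENNReal.ofReal Real.pi := by
      rw [← NNReal.coe_real_pi, ENNReal.ofReal_coe_nnreal]
    rw [← ENNReal.ofReal_pow (hr i hi).le, hpi,
      ← ENNReal.ofReal_mul (by positivity), mul_comm]
  rw [Finset.sum_congr rfl hBvol,
    ← ENNReal.ofReal_sum_of_nonneg (fun i _ => by positivity)] at key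
  exact (ENNReal.ofReal_le_ofReal_iff (by nlinarith)).mp key

open Classical in
/-- Circles crossing the horizontal cut lines at heights `k·(w/ε)` have total
area at most `N·2w²·⌊hε/w⌋ ≤ 2ε·N·wh`. -/
theorem stmt18 (n N : ℕ) (w h ε : ℝ)
    (hw : 0 < w) (hh : 0 < h) (hε0 : 0 < ε) (hε1 : ε < 1)
    (hratio : h / w ≥ 1 / ε ^ 2)
    (r x y : Fin n → ℝ) (b : Fin n → Fin N)
    (hr : ∀ i, 0 < r i)
    (hin : ∀ i, r i ≤ x i ∧ x i ≤ w - r i ∧ r i ≤ y i ∧ y i ≤ h - r i)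
    (hdisj : ∀ i j, i ≠ j → b i = b j →
      (x i - x j) ^ 2 + (y i - y j) ^ 2 ≥ (r i + r j) ^ 2) :
    (∑ i ∈ Finset.univ.filter (fun i : Fin n => ∃ k : ℕ, 1 ≤ k ∧ k ≤ ⌊h * ε / w⌋₊ ∧
        y i - r i < (k : ℝ) * (w / ε) ∧ (k : ℝ) * (w / ε) < y i + r i),
      Real.pi * r i ^ 2) ≤ (N : ℝ) * (2 * w ^ 2) * (⌊h * ε / w⌋₊ : ℝ) ∧
    (N : ℝ) * (2 * w ^ 2) * (⌊h * ε / w⌋₊ : ℝ) ≤ 2 * ε * N * (w * h) := by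
  have hrw : ∀ i, 2 * r i ≤ w := fun i => by
    obtain ⟨h1, h2, _, _⟩ := hin i; linarith
  constructor
  · set m := ⌊h * ε / w⌋₊ with hm
    set P : Fin n → Prop := fun i => ∃ k : ℕ, 1 ≤ k ∧ k ≤ m ∧
        y i - r i < (k : ℝ) * (w / ε) ∧ (k : ℝ) * (w / ε) < y i + r i with hP
    set g : Fin n → Fin N × ℕ :=
      fun i => (b i, if hi : P i then Classical.choose hi else 0) with hg
    set S := Finset.univ.filter P with hS
    set t : Finset (Fin N × ℕ) := Finset.univ ×ˢ Finset.Icc 1 m with ht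
    have hmaps : ∀ i ∈ S, g i ∈ t := by
      intro i hi
      have hPi : P i := (Finset.mem_filter.mp hi).2
      obtain ⟨h1, h2, _, _⟩ := Classical.choose_spec hPi
      simp only [hg, ht, Finset.mem_product, Finset.mem_univ, true_and, dif_pos hPi,
        Finset.mem_Icc]
      exact ⟨h1, h2⟩
    have hgood : ∀ i ∈ S, ∀ k : ℕ, (g i).2 = k →
        1 ≤ k ∧ k ≤ m ∧ y i - r i < (k : ℝ) * (w / ε) ∧ (k : ℝ) * (w / ε) < y i + r i := by
      intro i hi k hk
      have hPi : P i := (Finset.mem_filter.mp hi).2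
      have := Classical.choose_spec hPi
      simp only [hg, dif_pos hPi] at hk
      rwa [hk] at this
    rw [← Finset.sum_fiberwise_of_maps_to hmaps]
    have hbound : ∀ p ∈ t, (∑ i ∈ S.filter (fun i => g i = p), Real.pi * r i ^ 2)
        ≤ 2 * w ^ 2 := by
      rintro ⟨j, k⟩ hp
      have hpack := pack_lemma (S.filter (fun i => g i = (j, k))) x y r
        (fun i _ => hr i) 0 w ((k : ℝ) * (w / ε) - w) ((k : ℝ) * (w / ε) + w)
        (by linarith) (by linarith) ?_ ?_
      · have : (w - 0) * (((k : ℝ) * (w / ε) + w) - ((k : ℝ) * (w / ε) - w)) = 2 * w ^ 2 := by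
          ring
        linarith
      · intro i hi
        obtain ⟨hiS, hgi⟩ := Finset.mem_filter.mp hi
        obtain ⟨_, _, hk3, hk4⟩ := hgood i hiS k (by rw [hgi])
        obtain ⟨h1, h2, h3, h4⟩ := hin i
        have := hrw i
        refine ⟨by linarith, by linarith, by linarith, by linarith⟩
      · intro i hi j' hj' hij
        obtain ⟨_, hgi⟩ := Finset.mem_filter.mp hi
        obtain ⟨_, hgj⟩ := Finset.mem_filter.mp hj'
        have hb1 : b i = j := congrArg Prod.fst hgi
        have hb2 : b j' = j := congrArg Prod.fst hgj
        exact hdisj i j' hij (by rw [hb1, hb2])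
    calc (∑ p ∈ t, ∑ i ∈ S.filter (fun i => g i = p), Real.pi * r i ^ 2)
        ≤ ∑ _p ∈ t, 2 * w ^ 2 := Finset.sum_le_sum hbound
      _ = (t.card : ℝ) * (2 * w ^ 2) := by rw [Finset.sum_const, nsmul_eq_mul]
      _ = (N : ℝ) * (2 * w ^ 2) * (m : ℝ) := by
          rw [ht, Finset.card_product, Nat.card_Icc, Finset.card_univ, Fintype.card_fin]
          push_cast
          ring
  · have hfl : (⌊h * ε / w⌋₊ : ℝ) ≤ h * ε / w := Nat.floor_le (by positivity)
    calc (N : ℝ) * (2 * w ^ 2) * (⌊h * ε / w⌋₊ : ℝ)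
        ≤ (N : ℝ) * (2 * w ^ 2) * (h * ε / w) := by
          have hN : (0:ℝ) ≤ (N : ℝ) * (2 * w ^ 2) := by positivity
          exact mul_le_mul_of_nonneg_left hfl hN
      _ = 2 * ε * N * (w * h) := by field_simp
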